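/- Let G = (V,E) be a finite simple graph with n = |V| vertices, and let T = C(n,2) − |E| + 2. Construct a temporal graph (G',λ) on vertex set V with lifetime T as follows: the snapshots at time slots 1 and 2 are both the complete graph K_n on V, and, enumerating the non-edges of G as f₃, f₄, …, f_T, the snapshot at time slot i (for 3 ≤ i ≤ T) contains exactly the single edge f_i. Then (G',λ) admits a proper temporal 2-coloring if and only if G is 4-colorable. -/

import Mathlib

/-- A proper temporal 2-coloring of the temporal graph whose snapshot at time
`t` is `Gs t` and whose lifetime is `T`: every edge of the underlying graph
(i.e. every pair adjacent in some snapshot within `[1,T]`) is properly colored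
at some time slot in `[1,T]` at which it is active. -/
def ProperTemporal2Coloring {V : Type*} (Gs : ℕ → SimpleGraph V) (T : ℕ)
    (φ : V → ℕ → Fin 2) : Prop :=
  ∀ u v : V, (∃ t ∈ Finset.Icc 1 T, (Gs t).Adj u v) →
    ∃ t ∈ Finset.Icc 1 T, (Gs t).Adj u v ∧ φ u t ≠ φ v t

/-- the temporal graph whose first two snapshots are `K_n` and
whose remaining `C(n,2) - |E|` snapshots each consist of exactly one distinct
non-edge of `G` admits a proper temporal 2-coloring iff `G` is 4-colorable. -/
theorem stmt_1 {V : Type*} [Fintype V] [DecidableEq V]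
    (G : SimpleGraph V) [DecidableRel G.Adj]
    (T : ℕ) (hT : T = (Fintype.card V).choose 2 - G.edgeFinset.card + 2)
    (Gs : ℕ → SimpleGraph V) (f : ℕ → Sym2 V)
    (h1 : Gs 1 = ⊤) (h2 : Gs 2 = ⊤)
    (hfmem : ∀ i ∈ Finset.Icc 3 T, f i ∈ Gᶜ.edgeSet)
    (hfinj : Set.InjOn f ↑(Finset.Icc 3 T))
    (hfsurj : ∀ e ∈ Gᶜ.edgeSet, ∃ i ∈ Finset.Icc 3 T, f i = e)
    (hGs : ∀ i ∈ Finset.Icc 3 T, Gs i = SimpleGraph.fromEdgeSet {f i}) :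
    (∃ φ : V → ℕ → Fin 2, ProperTemporal2Coloring Gs T φ) ↔ G.Colorable 4 := by
  have hT2 : 2 ≤ T := by omega
  constructor
  · rintro ⟨φ, hφ⟩
    have key : ∀ u v : V, G.Adj u v → (φ u 1, φ u 2) ≠ (φ v 1, φ v 2) := by
      intro u v huv
      obtain ⟨t, ht, hadj, hne⟩ := hφ u v
        ⟨1, by simp only [Finset.mem_Icc]; omega, by simp [h1, huv.ne]⟩
      rw [Finset.mem_Icc] at ht
      by_cases ht1 : t = 1
      · subst ht1
        intro h
        exact hne (congrArg Prod.fst h)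
      by_cases ht2 : t = 2
      · subst ht2
        intro h
        exact hne (congrArg Prod.snd h)
      · exfalso
        have ht3 : t ∈ Finset.Icc 3 T := by rw [Finset.mem_Icc]; omega
        rw [hGs t ht3, SimpleGraph.fromEdgeSet_adj] at hadj
        have hft : f t = s(u, v) := by
          simpa using hadj.1.symm
        have := hfmem t ht3
        rw [hft, SimpleGraph.mem_edgeSet] at this
        exact this.2 huv
    refine ⟨(SimpleGraph.Coloring.mk
      (fun v => (finProdFinEquiv (φ v 1, φ v 2) : Fin 4)) ?_)⟩
    intro u v huv h
    exact key u v huv (finProdFinEquiv.injective h)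
  · rintro ⟨c⟩
    classical
    let d : V → Fin 2 × Fin 2 := fun v => finProdFinEquiv.symm (c v)
    refine ⟨fun v t => if t = 1 then (d v).1 else if t = 2 then (d v).2
      else if (Quot.out (f t)).1 = v then 0 else 1, ?_⟩
    rintro u v ⟨t, ht, hadj⟩
    have hne : u ≠ v := hadj.ne
    by_cases hG : G.Adj u v
    · have hd : d u ≠ d v := by
        intro h
        exact c.valid hG (finProdFinEquiv.symm.injective h)
      by_cases h : (d u).1 = (d v).1
      case neg =>
        exact ⟨1, by rw [Finset.mem_Icc]; omega, by simp [h1, hne], by simpa using h⟩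
      have h : (d u).2 ≠ (d v).2 := fun h2 => hd (Prod.ext h h2)
      exact ⟨2, by rw [Finset.mem_Icc]; omega, by simp [h2, hne], by simpa using h⟩
      -- old:
      /- exact ⟨1, by rw [Finset.mem_Icc]; omega, by simp [h1, hne], by simpa using h⟩
      -/
    · have hcompl : s(u, v) ∈ Gᶜ.edgeSet := by
        rw [SimpleGraph.mem_edgeSet, SimpleGraph.compl_adj]
        exact ⟨hne, hG⟩
      obtain ⟨i, hi, hfi⟩ := hfsurj _ hcompl
      have hi' := Finset.mem_Icc.mp hi
      refine ⟨i, by rw [Finset.mem_Icc]; omega, ?_, ?_⟩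
      · rw [hGs i hi, SimpleGraph.fromEdgeSet_adj]
        exact ⟨by simp [hfi], hne⟩
      · have hout : Sym2.mk (Quot.out (f i)).1 (Quot.out (f i)).2 = Sym2.mk (u, v).1 (u, v).2 :=
          (Quot.out_eq (f i)).trans hfi
        rw [Sym2.mk_eq_mk_iff] at hout
        have hi1 : i ≠ 1 := by omega
        have hi2 : i ≠ 2 := by omega
        simp only [hi1, hi2, if_false, if_neg]
        rcases hout with h | h
        · have h1 : (Quot.out (f i)).1 = u := congrArg Prod.fst h
          have h2 : (Quot.out (f i)).1 ≠ v := by rw [h1]; exact hne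
          simp [h1, h2, hne, Ne.symm hne]
        · have h1 : (Quot.out (f i)).1 = v := by
            have := congrArg Prod.fst h
            simpa using this
          have h2 : (Quot.out (f i)).1 ≠ u := by rw [h1]; exact fun e => hne e.symm
          simp [h1, h2, hne, Ne.symm hne]
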